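/- arXiv:2601.17650 — 4 statements merged into one kernel-verified Lean document; each statement's English description precedes it below -/
import Mathlib

section
/- Let E be a real inner product space, let ϖ ≥ 1 be a real number, and let a, b ∈ E. Then ⟪‖a‖^{ϖ−1}·a − ‖b‖^{ϖ−1}·b, a − b⟫ ≥ (1/2)·‖a‖^{ϖ−1}·‖a − b‖² + (1/2)·‖b‖^{ϖ−1}·‖a − b‖². -/
open scoped RealInnerProductSpace

/-- Pointwise strong monotonicity of the damping nonlinearity `a ↦ ‖a‖^(ϖ-1) • a`
(estimate (2.23) of the paper). -/
theorem damping_strong_monotone {E : Type*} [NormedAddCommGroup E] [InnerProductSpace ℝ E]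
    (ϖ : ℝ) (hϖ : 1 ≤ ϖ) (a b : E) :
    ⟪(‖a‖ ^ (ϖ - 1)) • a - (‖b‖ ^ (ϖ - 1)) • b, a - b⟫ ≥
      (1 / 2) * ‖a‖ ^ (ϖ - 1) * ‖a - b‖ ^ 2 + (1 / 2) * ‖b‖ ^ (ϖ - 1) * ‖a - b‖ ^ 2 := by
  have he : (0:ℝ) ≤ ϖ - 1 := by linarith
  have key : (‖a‖ ^ (ϖ - 1) - ‖b‖ ^ (ϖ - 1)) * (‖a‖ ^ 2 - ‖b‖ ^ 2) ≥ 0 := by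
    rcases le_total ‖a‖ ‖b‖ with h | h
    · have h1 : ‖a‖ ^ (ϖ - 1) ≤ ‖b‖ ^ (ϖ - 1) :=
        Real.rpow_le_rpow (norm_nonneg a) h he
      have h2 : ‖a‖ ^ 2 ≤ ‖b‖ ^ 2 := by nlinarith [norm_nonneg a, norm_nonneg b]
      nlinarith
    · have h1 : ‖b‖ ^ (ϖ - 1) ≤ ‖a‖ ^ (ϖ - 1) :=
        Real.rpow_le_rpow (norm_nonneg b) h he
      have h2 : ‖b‖ ^ 2 ≤ ‖a‖ ^ 2 := by nlinarith [norm_nonneg a, norm_nonneg b]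
      nlinarith
  have hnsq : ‖a - b‖ ^ 2 = ‖a‖ ^ 2 - 2 * ⟪a, b⟫ + ‖b‖ ^ 2 := norm_sub_sq_real a b
  have hexp : ⟪(‖a‖ ^ (ϖ - 1)) • a - (‖b‖ ^ (ϖ - 1)) • b, a - b⟫ =
      ‖a‖ ^ (ϖ - 1) * (‖a‖ ^ 2) - ‖a‖ ^ (ϖ - 1) * ⟪a, b⟫
        - ‖b‖ ^ (ϖ - 1) * ⟪a, b⟫ + ‖b‖ ^ (ϖ - 1) * (‖b‖ ^ 2) := by
    simp only [inner_sub_left, inner_sub_right, real_inner_smul_left,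
      real_inner_self_eq_norm_sq, real_inner_comm b a]
    ring
  rw [hexp, hnsq]
  nlinarith [key]
end

section
/- Let E be a real inner product space, let ϖ ≥ 1 be a real number, and let a, b ∈ E. Then ⟪‖a‖^{ϖ−1}·a − ‖b‖^{ϖ−1}·b, a − b⟫ ≥ 2^{1−ϖ}·‖a − b‖^{ϖ+1}. -/
open scoped RealInnerProductSpace

private lemma rpow_superadd {p u v : ℝ} (hp : 1 ≤ p) (hu : 0 ≤ u) (hv : 0 ≤ v) :
    u ^ p + v ^ p ≤ (u + v) ^ p := by
  have hp0 : p ≠ 0 := by linarith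
  have huv : 0 ≤ u + v := add_nonneg hu hv
  have h1 : u ^ p ≤ (u + v) ^ (p - 1) * u := by
    have : u ^ p = u ^ (p - 1) * u := by
      rw [← Real.rpow_add_one' hu (by simpa using hp0)]; ring_nf
    rw [this]
    exact mul_le_mul_of_nonneg_right
      (Real.rpow_le_rpow hu (by linarith) (by linarith)) hu
  have h2 : v ^ p ≤ (u + v) ^ (p - 1) * v := by
    have : v ^ p = v ^ (p - 1) * v := by
      rw [← Real.rpow_add_one' hv (by simpa using hp0)]; ring_nf
    rw [this]
    exact mul_le_mul_of_nonneg_right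
      (Real.rpow_le_rpow hv (by linarith) (by linarith)) hv
  have h3 : (u + v) ^ p = (u + v) ^ (p - 1) * (u + v) := by
    rw [← Real.rpow_add_one' huv (by simpa using hp0)]; ring_nf
  rw [h3]; nlinarith

private lemma rpow_q2 {q z : ℝ} (hq : 0 ≤ q) (hz : 0 ≤ z) : z ^ (q + 2) = z ^ q * z ^ 2 := by
  rcases hz.eq_or_lt with h | h
  · rw [← h, Real.zero_rpow (by linarith)]; ring
  · rw [Real.rpow_add h, show ((2:ℝ) = ((2:ℕ):ℝ)) by norm_num, Real.rpow_natCast]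

private lemma sq_rpow_half {q z : ℝ} (hz : 0 ≤ z) :
    ((z ^ 2 : ℝ)) ^ ((q + 2) / 2) = z ^ (q + 2) := by
  rw [show (z ^ 2 : ℝ) = z ^ ((2:ℕ):ℝ) by rw [Real.rpow_natCast],
    ← Real.rpow_mul hz]
  congr 1; push_cast; ring

private lemma two_neg_le_one {q : ℝ} (hq : 0 ≤ q) : (2:ℝ) ^ (-q) ≤ 1 :=
  Real.rpow_le_one_of_one_le_of_nonpos one_le_two (by linarith)

private lemma e1 {q x y : ℝ} (hq : 0 ≤ q) (hx : 0 < x) (hy : 0 < y) :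
    (2:ℝ) ^ (-q) * (x + y) ^ (q + 2) ≤ x ^ q * x ^ 2 + y ^ q * y ^ 2 + (x ^ q + y ^ q) * (x * y) := by
  have h1 : (x + y) ^ (q + 1) ≤ 2 ^ q * (x ^ (q + 1) + y ^ (q + 1)) := by
    have hc := (convexOn_rpow (p := q + 1) (by linarith)).2
      (Set.mem_Ici.2 (by positivity : (0:ℝ) ≤ 2 * x))
      (Set.mem_Ici.2 (by positivity : (0:ℝ) ≤ 2 * y))
      (by norm_num : (0:ℝ) ≤ 1/2) (by norm_num : (0:ℝ) ≤ 1/2) (by norm_num)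
    simp only [smul_eq_mul] at hc
    have hx2 : ((2:ℝ) * x) ^ (q + 1) = 2 ^ (q + 1) * x ^ (q + 1) :=
      Real.mul_rpow (by norm_num) hx.le
    have hy2 : ((2:ℝ) * y) ^ (q + 1) = 2 ^ (q + 1) * y ^ (q + 1) :=
      Real.mul_rpow (by norm_num) hy.le
    have hmix : (1/2 : ℝ) * (2 * x) + 1/2 * (2 * y) = x + y := by ring
    rw [hmix, hx2, hy2] at hc
    have h21 : (2:ℝ) ^ (q + 1) = 2 ^ q * 2 := by
      rw [Real.rpow_add_one (by norm_num : (2:ℝ) ≠ 0)]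
    rw [h21] at hc
    nlinarith
  have hxy : (0:ℝ) < x + y := by linarith
  have h2 : (x + y) ^ (q + 2) = (x + y) ^ (q + 1) * (x + y) := by
    rw [← Real.rpow_add_one hxy.ne']; ring_nf
  have h2q : (0:ℝ) < 2 ^ (-q) := Real.rpow_pos_of_pos (by norm_num) _
  have hmul : (2:ℝ) ^ (-q) * 2 ^ q = 1 := by
    rw [← Real.rpow_add (by norm_num : (0:ℝ) < 2)]; simp
  have h3 : (2:ℝ) ^ (-q) * (x + y) ^ (q + 2) ≤ (x ^ (q + 1) + y ^ (q + 1)) * (x + y) := by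
    rw [h2]
    calc (2:ℝ) ^ (-q) * ((x + y) ^ (q + 1) * (x + y))
        ≤ 2 ^ (-q) * ((2 ^ q * (x ^ (q + 1) + y ^ (q + 1))) * (x + y)) := by
          apply mul_le_mul_of_nonneg_left _ h2q.le
          exact mul_le_mul_of_nonneg_right h1 hxy.le
      _ = (x ^ (q + 1) + y ^ (q + 1)) * (x + y) := by
          rw [← mul_assoc, ← mul_assoc, hmul]; ring
  have hx1 : x ^ (q + 1) = x ^ q * x := by
    rw [Real.rpow_add_one hx.ne']
  have hy1 : y ^ (q + 1) = y ^ q * y := by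
    rw [Real.rpow_add_one hy.ne']
  calc (2:ℝ) ^ (-q) * (x + y) ^ (q + 2) ≤ (x ^ (q + 1) + y ^ (q + 1)) * (x + y) := h3
    _ = x ^ q * x ^ 2 + y ^ q * y ^ 2 + (x ^ q + y ^ q) * (x * y) := by
        rw [hx1, hy1]; ring

private lemma e2 {q x y : ℝ} (hq : 0 ≤ q) (hy : 0 < y) (hxy : y ≤ x) :
    (2:ℝ) ^ (-q) * (x - y) ^ (q + 2) ≤ x ^ q * x ^ 2 + y ^ q * y ^ 2 - (x ^ q + y ^ q) * (x * y) := by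
  have hx : (0:ℝ) < x := lt_of_lt_of_le hy hxy
  have hd : (0:ℝ) ≤ x - y := by linarith
  have hsup : y ^ (q + 1) + (x - y) ^ (q + 1) ≤ x ^ (q + 1) := by
    have := rpow_superadd (p := q + 1) (by linarith) hy.le hd
    rwa [show y + (x - y) = x by ring] at this
  have h1 : (x - y) ^ (q + 2) = (x - y) ^ (q + 1) * (x - y) := by
    rcases hd.eq_or_lt with h | h
    · rw [← h]; simp [Real.zero_rpow, show q + 2 ≠ 0 by linarith, show q + 1 ≠ 0 by linarith]
    · rw [← Real.rpow_add_one h.ne']; ring_nf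
  have h2 : (2:ℝ) ^ (-q) * (x - y) ^ (q + 2) ≤ (x - y) ^ (q + 2) := by
    have : (0:ℝ) ≤ (x - y) ^ (q + 2) := Real.rpow_nonneg hd _
    nlinarith [two_neg_le_one hq]
  have h3 : (x - y) ^ (q + 2) ≤ (x ^ (q + 1) - y ^ (q + 1)) * (x - y) := by
    rw [h1]
    exact mul_le_mul_of_nonneg_right (by linarith) hd
  have hx1 : x ^ (q + 1) = x ^ q * x := by rw [Real.rpow_add_one hx.ne']
  have hy1 : y ^ (q + 1) = y ^ q * y := by rw [Real.rpow_add_one hy.ne']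
  have h4 : (x ^ (q + 1) - y ^ (q + 1)) * (x - y)
      = x ^ q * x ^ 2 + y ^ q * y ^ 2 - (x ^ q + y ^ q) * (x * y) := by
    rw [hx1, hy1]; ring
  linarith

private lemma e2' {q x y : ℝ} (hq : 0 ≤ q) (hx : 0 < x) (hy : 0 < y) :
    (2:ℝ) ^ (-q) * |x - y| ^ (q + 2) ≤ x ^ q * x ^ 2 + y ^ q * y ^ 2 - (x ^ q + y ^ q) * (x * y) := by
  rcases le_total y x with h | h
  · rw [abs_of_nonneg (by linarith)]; exact e2 hq hy h
  · rw [abs_of_nonpos (by linarith), show -(x - y) = y - x by ring]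
    have := e2 hq hx h
    linarith

private lemma key {q x y c : ℝ} (hq : 0 ≤ q) (hx : 0 ≤ x) (hy : 0 ≤ y) (hc : |c| ≤ x * y) :
    (2:ℝ) ^ (-q) * (x ^ 2 + y ^ 2 - 2 * c) ^ ((q + 2) / 2)
      ≤ x ^ q * x ^ 2 + y ^ q * y ^ 2 - (x ^ q + y ^ q) * c := by
  have h2q : (0:ℝ) < 2 ^ (-q) := Real.rpow_pos_of_pos (by norm_num) _
  rcases hx.eq_or_lt with hx0 | hx0
  · have hc0 : c = 0 := by
      have : |c| ≤ 0 := by rw [← hx0] at hc; simpa using hc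
      simpa using le_antisymm this (abs_nonneg c)
    subst hc0
    rw [← hx0]
    have : ((0:ℝ) ^ 2 + y ^ 2 - 2 * 0) = y ^ 2 := by ring
    rw [this]
    rw [sq_rpow_half hy, rpow_q2 hq hy]
    have h1 : (0:ℝ) ^ q * (0:ℝ) ^ 2 = 0 := by ring
    have hyq : (0:ℝ) ≤ y ^ q * y ^ 2 := by positivity
    nlinarith [two_neg_le_one hq]
  rcases hy.eq_or_lt with hy0 | hy0
  · have hc0 : c = 0 := by
      have : |c| ≤ 0 := by rw [← hy0] at hc; simpa using hc
      simpa using le_antisymm this (abs_nonneg c)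
    subst hc0
    rw [← hy0]
    have : (x ^ 2 + (0:ℝ) ^ 2 - 2 * 0) = x ^ 2 := by ring
    rw [this]
    rw [sq_rpow_half hx, rpow_q2 hq hx]
    have h1 : (0:ℝ) ^ q * (0:ℝ) ^ 2 = 0 := by ring
    have hxq : (0:ℝ) ≤ x ^ q * x ^ 2 := by positivity
    nlinarith [two_neg_le_one hq]
  -- main case x, y > 0
  have hxy : (0:ℝ) < x * y := mul_pos hx0 hy0
  set t : ℝ := (x * y - c) / (2 * (x * y)) with ht_def
  set s : ℝ := (x * y + c) / (2 * (x * y)) with hs_def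
  have hcabs := abs_le.1 hc
  have ht : 0 ≤ t := by
    apply div_nonneg (by linarith [hcabs.2]) (by linarith)
  have hs : 0 ≤ s := by
    apply div_nonneg (by linarith [hcabs.1]) (by linarith)
  have hts : t + s = 1 := by
    rw [ht_def, hs_def]
    field_simp
    ring
  have hmix : t * (x + y) ^ 2 + s * (x - y) ^ 2 = x ^ 2 + y ^ 2 - 2 * c := by
    rw [ht_def, hs_def]
    field_simp
    ring
  have hconv := (convexOn_rpow (p := (q + 2) / 2) (by linarith)).2
    (Set.mem_Ici.2 (by positivity : (0:ℝ) ≤ (x + y) ^ 2))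
    (Set.mem_Ici.2 (by positivity : (0:ℝ) ≤ (x - y) ^ 2)) ht hs hts
  simp only [smul_eq_mul] at hconv
  rw [hmix] at hconv
  have hA : ((x + y) ^ 2 : ℝ) ^ ((q + 2) / 2) = (x + y) ^ (q + 2) :=
    sq_rpow_half (by linarith)
  have hB : ((x - y) ^ 2 : ℝ) ^ ((q + 2) / 2) = |x - y| ^ (q + 2) := by
    rw [← sq_abs]; exact sq_rpow_half (abs_nonneg _)
  rw [hA, hB] at hconv
  have hchain : (2:ℝ) ^ (-q) * (x ^ 2 + y ^ 2 - 2 * c) ^ ((q + 2) / 2)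
      ≤ t * ((2:ℝ) ^ (-q) * (x + y) ^ (q + 2)) + s * ((2:ℝ) ^ (-q) * |x - y| ^ (q + 2)) := by
    nlinarith [hconv]
  have hE1 := e1 hq hx0 hy0
  have hE2 := e2' hq hx0 hy0
  have hfin : t * ((2:ℝ) ^ (-q) * (x + y) ^ (q + 2)) + s * ((2:ℝ) ^ (-q) * |x - y| ^ (q + 2))
      ≤ t * (x ^ q * x ^ 2 + y ^ q * y ^ 2 + (x ^ q + y ^ q) * (x * y))
        + s * (x ^ q * x ^ 2 + y ^ q * y ^ 2 - (x ^ q + y ^ q) * (x * y)) := by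
    have := mul_le_mul_of_nonneg_left hE1 ht
    have := mul_le_mul_of_nonneg_left hE2 hs
    linarith
  have hlast : t * (x ^ q * x ^ 2 + y ^ q * y ^ 2 + (x ^ q + y ^ q) * (x * y))
        + s * (x ^ q * x ^ 2 + y ^ q * y ^ 2 - (x ^ q + y ^ q) * (x * y))
      = x ^ q * x ^ 2 + y ^ q * y ^ 2 - (x ^ q + y ^ q) * c := by
    rw [ht_def, hs_def]
    field_simp
    ring
  linarith

/-- Pointwise coercive monotonicity of the damping nonlinearity `a ↦ ‖a‖^(ϖ-1) • a`
(estimate (2.23) of the paper). -/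
theorem damping_coercive_monotone {E : Type*} [NormedAddCommGroup E] [InnerProductSpace ℝ E]
    (ϖ : ℝ) (hϖ : 1 ≤ ϖ) (a b : E) :
    ⟪(‖a‖ ^ (ϖ - 1)) • a - (‖b‖ ^ (ϖ - 1)) • b, a - b⟫ ≥
      (2 : ℝ) ^ (1 - ϖ) * ‖a - b‖ ^ (ϖ + 1) := by
  have hq : (0:ℝ) ≤ ϖ - 1 := by linarith
  have hinner : ⟪(‖a‖ ^ (ϖ - 1)) • a - (‖b‖ ^ (ϖ - 1)) • b, a - b⟫
      = ‖a‖ ^ (ϖ - 1) * ‖a‖ ^ 2 + ‖b‖ ^ (ϖ - 1) * ‖b‖ ^ 2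
        - (‖a‖ ^ (ϖ - 1) + ‖b‖ ^ (ϖ - 1)) * ⟪a, b⟫ := by
    simp only [inner_sub_left, inner_sub_right, real_inner_smul_left,
      real_inner_self_eq_norm_sq]
    rw [real_inner_comm b a]
    ring
  have hnormsq : ‖a - b‖ ^ 2 = ‖a‖ ^ 2 + ‖b‖ ^ 2 - 2 * ⟪a, b⟫ := by
    rw [← real_inner_self_eq_norm_sq, inner_sub_sub_self, real_inner_self_eq_norm_sq,
      real_inner_self_eq_norm_sq, real_inner_comm b a]
    ring
  have hnorm : ‖a - b‖ ^ (ϖ + 1)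
      = (‖a‖ ^ 2 + ‖b‖ ^ 2 - 2 * ⟪a, b⟫) ^ (((ϖ - 1) + 2) / 2) := by
    rw [← hnormsq, sq_rpow_half (norm_nonneg _)]
    congr 1
    ring
  have h2 : (2:ℝ) ^ (1 - ϖ) = (2:ℝ) ^ (-(ϖ - 1)) := by congr 1; ring
  rw [ge_iff_le, h2, hinner, hnorm]
  exact key hq (norm_nonneg a) (norm_nonneg b) (abs_real_inner_le_norm a b)
end

section
/- Let E be a real inner product space, let ϖ ≥ 1 be a real number, and let a, b ∈ E. Then ‖‖a‖^{ϖ−1}·a − ‖b‖^{ϖ−1}·b‖ ≤ ϖ·(‖a‖ + ‖b‖)^{ϖ−1}·‖a − b‖. -/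
open Real Set

lemma key_scalar {q x y : ℝ} (hq : 0 ≤ q) (hy : 0 ≤ y) (hxy : y ≤ x) :
    (x ^ q - y ^ q) * y ≤ q * (x + y) ^ q * (x - y) := by
  rcases hy.eq_or_lt with rfl | hy0
  · simp
    positivity
  rcases hxy.eq_or_lt with rfl | hlt
  · simp
  have hx0 : 0 < x := hy0.trans hlt
  -- MVT on t ↦ t ^ q over [y, x]
  obtain ⟨c, hc, hceq⟩ := exists_hasDerivAt_eq_slope (fun t => t ^ q)
      (fun t => q * t ^ (q - 1)) hlt
      (fun t ht => (Real.continuousAt_rpow_const t q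
        (Or.inl (ne_of_gt (hy0.trans_le ht.1)))).continuousWithinAt)
      (fun t ht => Real.hasDerivAt_rpow_const (Or.inl (ne_of_gt (hy0.trans ht.1))))
  have hc0 : 0 < c := hy0.trans hc.1
  have hsub : x ^ q - y ^ q = q * c ^ (q - 1) * (x - y) := by
    rw [eq_div_iff (by linarith : x - y ≠ 0)] at hceq
    linarith [hceq]
  rw [hsub]
  have hbound : c ^ (q - 1) * y ≤ (x + y) ^ q := by
    rcases le_total q 1 with h1 | h1
    · calc c ^ (q - 1) * y ≤ y ^ (q - 1) * y := by
            gcongr ?_ * y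
            exact Real.rpow_le_rpow_of_nonpos hy0 hc.1.le (by linarith)
        _ = y ^ q := by
            rw [← Real.rpow_add_one (ne_of_gt hy0) (q - 1)]; ring_nf
        _ ≤ (x + y) ^ q := Real.rpow_le_rpow hy (by linarith) hq
    · calc c ^ (q - 1) * y ≤ (x + y) ^ (q - 1) * (x + y) := by
            apply mul_le_mul _ (by linarith) hy (by positivity)
            exact Real.rpow_le_rpow hc0.le (by linarith [hc.2]) (by linarith)
        _ = (x + y) ^ q := by
            rw [← Real.rpow_add_one (by positivity) (q - 1)]; ring_nf
  calc q * c ^ (q - 1) * (x - y) * y = q * (c ^ (q - 1) * y) * (x - y) := by ring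
    _ ≤ q * (x + y) ^ q * (x - y) := by
        apply mul_le_mul_of_nonneg_right _ (by linarith)
        exact mul_le_mul_of_nonneg_left hbound hq

lemma key_main {E : Type*} [NormedAddCommGroup E] [InnerProductSpace ℝ E]
    (q : ℝ) (hq : 0 ≤ q) (a b : E) (hab : ‖b‖ ≤ ‖a‖) :
    ‖(‖a‖ ^ q) • a - (‖b‖ ^ q) • b‖ ≤ (1 + q) * (‖a‖ + ‖b‖) ^ q * ‖a - b‖ := by
  have hid : (‖a‖ ^ q) • a - (‖b‖ ^ q) • b
      = (‖a‖ ^ q) • (a - b) + (‖a‖ ^ q - ‖b‖ ^ q) • b := by module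
  have h1 : ‖a‖ ^ q ≤ (‖a‖ + ‖b‖) ^ q :=
    Real.rpow_le_rpow (norm_nonneg a) (by linarith [norm_nonneg b]) hq
  have h2 : (‖a‖ ^ q - ‖b‖ ^ q) * ‖b‖ ≤ q * (‖a‖ + ‖b‖) ^ q * (‖a‖ - ‖b‖) :=
    key_scalar hq (norm_nonneg b) hab
  have h3 : ‖a‖ - ‖b‖ ≤ ‖a - b‖ := norm_sub_norm_le a b
  have hnn : (0:ℝ) ≤ ‖a‖ ^ q - ‖b‖ ^ q := by
    have := Real.rpow_le_rpow (norm_nonneg b) hab hq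
    linarith
  calc ‖(‖a‖ ^ q) • a - (‖b‖ ^ q) • b‖
      ≤ ‖(‖a‖ ^ q) • (a - b)‖ + ‖(‖a‖ ^ q - ‖b‖ ^ q) • b‖ := by
        rw [hid]; exact norm_add_le _ _
    _ = (‖a‖ ^ q) * ‖a - b‖ + (‖a‖ ^ q - ‖b‖ ^ q) * ‖b‖ := by
        rw [norm_smul, norm_smul, Real.norm_eq_abs, Real.norm_eq_abs,
          abs_of_nonneg (by positivity), abs_of_nonneg hnn]
    _ ≤ (‖a‖ + ‖b‖) ^ q * ‖a - b‖ + q * (‖a‖ + ‖b‖) ^ q * (‖a‖ - ‖b‖) := by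
        gcongr
    _ ≤ (‖a‖ + ‖b‖) ^ q * ‖a - b‖ + q * (‖a‖ + ‖b‖) ^ q * ‖a - b‖ := by
        gcongr
    _ = (1 + q) * (‖a‖ + ‖b‖) ^ q * ‖a - b‖ := by ring

/-- Pointwise mean-value-theorem estimate for the damping nonlinearity
`a ↦ ‖a‖^(ϖ-1) • a`, underlying the local Lipschitz property of `K`. -/
theorem damping_locally_lipschitz {E : Type*} [NormedAddCommGroup E] [InnerProductSpace ℝ E]
    (ϖ : ℝ) (hϖ : 1 ≤ ϖ) (a b : E) :
    ‖(‖a‖ ^ (ϖ - 1)) • a - (‖b‖ ^ (ϖ - 1)) • b‖ ≤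
      ϖ * (‖a‖ + ‖b‖) ^ (ϖ - 1) * ‖a - b‖ := by
  have hq : 0 ≤ ϖ - 1 := by linarith
  rcases le_total ‖b‖ ‖a‖ with h | h
  · have := key_main (ϖ - 1) hq a b h
    simpa [show 1 + (ϖ - 1) = ϖ by ring] using this
  · have := key_main (ϖ - 1) hq b a h
    rw [norm_sub_rev, norm_sub_rev a b, add_comm ‖a‖]
    simpa [show 1 + (ϖ - 1) = ϖ by ring] using this
end

section
/- Let d ≥ 1, let Q ⊆ ℝ^d be a measurable set, let μ > 0, β > 0 and ϖ > 3 be real numbers, and set ϖ̂ = ((ϖ−3)/(2μ(ϖ−1))) · (4/(μβ(ϖ−1)))^{2/(ϖ−3)}. Let ζ, 𝔷 : ℝ^d → ℝ^d be measurable and let η : ℝ^d → ℝ^d be differentiable. Assume the function x ↦ ⟪Dη(x)(ζ(x)), 𝔷(x)⟫ is integrable on Q, and that x ↦ ‖Dη(x)‖², x ↦ ‖𝔷(x)‖^{ϖ−1}‖ζ(x)‖² and x ↦ ‖ζ(x)‖² are integrable on Q. Then |∫_Q ⟪Dη(x)(ζ(x)), 𝔷(x)⟫ dx| ≤ (μ/2)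 ∫_Q ‖Dη(x)‖² dx + (β/4) ∫_Q ‖𝔷(x)‖^{ϖ−1}‖ζ(x)‖² dx + ϖ̂ ∫_Q ‖ζ(x)‖² dx. -/
open MeasureTheory
open scoped RealInnerProductSpace

/-- Key scalar Young-type inequality: for `X ≥ 0`,
`X/(2μ) ≤ (β/4) X^((ϖ-1)/2) + ϖ̂`. -/
lemma key_young_estimate (μ β ϖ : ℝ) (hμ : 0 < μ) (hβ : 0 < β) (hϖ : 3 < ϖ)
    (X : ℝ) (hX : 0 ≤ X) :
    X / (2 * μ) ≤ (β / 4) * X ^ ((ϖ - 1) / 2) +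
      ((ϖ - 3) / (2 * μ * (ϖ - 1))) * (4 / (μ * β * (ϖ - 1))) ^ ((2 : ℝ) / (ϖ - 3)) := by
  set p : ℝ := (ϖ - 1) / 2 with hp
  set q : ℝ := (ϖ - 1) / (ϖ - 3) with hq
  have hϖ1 : (0:ℝ) < ϖ - 1 := by linarith
  have hϖ3 : (0:ℝ) < ϖ - 3 := by linarith
  have hp0 : p ≠ 0 := by positivity
  have hq0 : (0:ℝ) < q := by positivity
  have hpq : p.HolderConjugate q := by
    refine Real.holderConjugate_iff.mpr ⟨?_, ?_⟩
    · rw [hp]; linarith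
    · rw [hp, hq]; field_simp; ring
  set c : ℝ := μ * β * (ϖ - 1) / 4 with hc
  have hcpos : 0 < c := by positivity
  set l : ℝ := c ^ (1 / p) with hl
  have hlpos : 0 < l := Real.rpow_pos_of_pos hcpos _
  have hY := Real.young_inequality_of_nonneg (mul_nonneg hlpos.le hX)
    (inv_nonneg.mpr hlpos.le) hpq
  have h1 : l * X * l⁻¹ = X := by field_simp
  have hlp : l ^ p = c := by
    rw [hl, ← Real.rpow_mul hcpos.le, one_div, inv_mul_cancel₀ hp0, Real.rpow_one]
  have h2 : (l * X) ^ p = c * X ^ p := by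
    rw [Real.mul_rpow hlpos.le hX, hlp]
  have h3 : l⁻¹ ^ q = (c⁻¹) ^ ((2:ℝ) / (ϖ - 3)) := by
    rw [hl, ← Real.rpow_neg hcpos.le, ← Real.rpow_mul hcpos.le,
      Real.inv_rpow hcpos.le, ← Real.rpow_neg hcpos.le]
    congr 1
    rw [hp, hq]
    field_simp
  rw [h1, h2, h3] at hY
  have hcinv : c⁻¹ = 4 / (μ * β * (ϖ - 1)) := by
    rw [hc]; field_simp
  rw [hcinv] at hY
  -- divide by 2μ
  have hdiv : X / (2 * μ) ≤ (c * X ^ p / p + (4 / (μ * β * (ϖ - 1))) ^ ((2:ℝ) / (ϖ - 3)) / q) / (2 * μ) := by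
    apply div_le_div_of_nonneg_right hY (by linarith) |>.trans_eq rfl
  refine hdiv.trans_eq ?_
  have hXp : 0 ≤ X ^ p := Real.rpow_nonneg hX _
  rw [hc, hq, hp]
  field_simp

lemma pointwise_bound (μ β ϖ : ℝ) (hμ : 0 < μ) (hβ : 0 < β) (hϖ : 3 < ϖ)
    {E : Type*} [NormedAddCommGroup E] [InnerProductSpace ℝ E]
    (A : E →L[ℝ] E) (v w : E) :
    |⟪A v, w⟫| ≤ (μ / 2) * ‖A‖ ^ 2 + (β / 4) * (‖w‖ ^ (ϖ - 1) * ‖v‖ ^ 2) +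
      (((ϖ - 3) / (2 * μ * (ϖ - 1))) * (4 / (μ * β * (ϖ - 1))) ^ ((2 : ℝ) / (ϖ - 3))) * ‖v‖ ^ 2 := by
  set K : ℝ := ((ϖ - 3) / (2 * μ * (ϖ - 1))) * (4 / (μ * β * (ϖ - 1))) ^ ((2 : ℝ) / (ϖ - 3)) with hK
  have h1 : |⟪A v, w⟫| ≤ ‖A‖ * ‖v‖ * ‖w‖ := by
    refine (abs_real_inner_le_norm _ _).trans ?_
    exact mul_le_mul_of_nonneg_right (A.le_opNorm v) (norm_nonneg w)
  have h2 : ‖A‖ * ‖v‖ * ‖w‖ ≤ (μ / 2) * ‖A‖ ^ 2 + (‖v‖ * ‖w‖) ^ 2 / (2 * μ) := by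
    rw [← sub_nonneg]
    have heq : (μ / 2) * ‖A‖ ^ 2 + (‖v‖ * ‖w‖) ^ 2 / (2 * μ) - ‖A‖ * ‖v‖ * ‖w‖ =
        (μ * ‖A‖ - ‖v‖ * ‖w‖) ^ 2 / (2 * μ) := by field_simp; ring
    rw [heq]; positivity
  have hkey := key_young_estimate μ β ϖ hμ hβ hϖ (‖w‖ ^ 2) (by positivity)
  have hrw : ((‖w‖ ^ 2 : ℝ)) ^ ((ϖ - 1) / 2) = ‖w‖ ^ (ϖ - 1) := by
    rw [← Real.rpow_natCast ‖w‖ 2, ← Real.rpow_mul (norm_nonneg _)]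
    norm_num
    congr 1
    ring
  rw [hrw] at hkey
  have h3 : (‖v‖ * ‖w‖) ^ 2 / (2 * μ) = ‖v‖ ^ 2 * (‖w‖ ^ 2 / (2 * μ)) := by ring
  have h4 : ‖v‖ ^ 2 * (‖w‖ ^ 2 / (2 * μ)) ≤ ‖v‖ ^ 2 * ((β / 4) * ‖w‖ ^ (ϖ - 1) + K) :=
    mul_le_mul_of_nonneg_left hkey (by positivity)
  calc |⟪A v, w⟫| ≤ (μ / 2) * ‖A‖ ^ 2 + (‖v‖ * ‖w‖) ^ 2 / (2 * μ) := h1.trans h2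
    _ ≤ (μ / 2) * ‖A‖ ^ 2 + ‖v‖ ^ 2 * ((β / 4) * ‖w‖ ^ (ϖ - 1) + K) := by
        rw [h3]; linarith
    _ = (μ / 2) * ‖A‖ ^ 2 + (β / 4) * (‖w‖ ^ (ϖ - 1) * ‖v‖ ^ 2) + K * ‖v‖ ^ 2 := by ring

/-- The trilinear-form estimate (2.3) of the paper:
`|b(ζ,η,𝔷)| ≤ (μ/2)‖η‖_V² + (β/4)‖|𝔷|^{(ϖ−1)/2}ζ‖₂² + ϖ̂‖ζ‖₂²`,
with the explicit constant `ϖ̂` of equation (2.4). -/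
theorem trilinear_form_estimate_supercritical (d : ℕ) (hd : 1 ≤ d)
    (Q : Set (EuclideanSpace ℝ (Fin d))) (hQ : MeasurableSet Q)
    (μ β ϖ : ℝ) (hμ : 0 < μ) (hβ : 0 < β) (hϖ : 3 < ϖ)
    (ζ 𝔷 η : EuclideanSpace ℝ (Fin d) → EuclideanSpace ℝ (Fin d))
    (hζm : Measurable ζ) (h𝔷m : Measurable 𝔷) (hη : Differentiable ℝ η)
    (hint : IntegrableOn (fun x => ⟪fderiv ℝ η x (ζ x), 𝔷 x⟫) Q)
    (hint1 : IntegrableOn (fun x => ‖fderiv ℝ η x‖ ^ 2) Q)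
    (hint2 : IntegrableOn (fun x => ‖𝔷 x‖ ^ (ϖ - 1) * ‖ζ x‖ ^ 2) Q)
    (hint3 : IntegrableOn (fun x => ‖ζ x‖ ^ 2) Q) :
    |∫ x in Q, ⟪fderiv ℝ η x (ζ x), 𝔷 x⟫| ≤
      (μ / 2) * (∫ x in Q, ‖fderiv ℝ η x‖ ^ 2) +
        (β / 4) * (∫ x in Q, ‖𝔷 x‖ ^ (ϖ - 1) * ‖ζ x‖ ^ 2) +
          (((ϖ - 3) / (2 * μ * (ϖ - 1))) * (4 / (μ * β * (ϖ - 1))) ^ ((2 : ℝ) / (ϖ - 3))) *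
            ∫ x in Q, ‖ζ x‖ ^ 2 := by
  set K : ℝ := ((ϖ - 3) / (2 * μ * (ϖ - 1))) * (4 / (μ * β * (ϖ - 1))) ^ ((2 : ℝ) / (ϖ - 3)) with hK
  have hg : IntegrableOn (fun x => (μ / 2) * ‖fderiv ℝ η x‖ ^ 2 +
      (β / 4) * (‖𝔷 x‖ ^ (ϖ - 1) * ‖ζ x‖ ^ 2) + K * ‖ζ x‖ ^ 2) Q :=
    ((hint1.const_mul _).add (hint2.const_mul _)).add (hint3.const_mul _)
  calc |∫ x in Q, ⟪fderiv ℝ η x (ζ x), 𝔷 x⟫|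
      ≤ ∫ x in Q, |⟪fderiv ℝ η x (ζ x), 𝔷 x⟫| := by
        simpa [Real.norm_eq_abs] using norm_integral_le_integral_norm
          (μ := volume.restrict Q) (fun x => ⟪fderiv ℝ η x (ζ x), 𝔷 x⟫)
    _ ≤ ∫ x in Q, ((μ / 2) * ‖fderiv ℝ η x‖ ^ 2 +
          (β / 4) * (‖𝔷 x‖ ^ (ϖ - 1) * ‖ζ x‖ ^ 2) + K * ‖ζ x‖ ^ 2) := by
        refine setIntegral_mono_on hint.abs hg hQ ?_
        intro x _
        exact pointwise_bound μ β ϖ hμ hβ hϖ (fderiv ℝ η x) (ζ x) (𝔷 x)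
    _ = (μ / 2) * (∫ x in Q, ‖fderiv ℝ η x‖ ^ 2) +
        (β / 4) * (∫ x in Q, ‖𝔷 x‖ ^ (ϖ - 1) * ‖ζ x‖ ^ 2) + K * ∫ x in Q, ‖ζ x‖ ^ 2 := by
        have i1 : IntegrableOn (fun x => (μ / 2) * ‖fderiv ℝ η x‖ ^ 2) Q :=
          hint1.const_mul _
        have i2 : IntegrableOn (fun x => (β / 4) * (‖𝔷 x‖ ^ (ϖ - 1) * ‖ζ x‖ ^ 2)) Q :=
          hint2.const_mul _
        have i3 : IntegrableOn (fun x => K * ‖ζ x‖ ^ 2) Q := hint3.const_mul _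
        have i12 : IntegrableOn (fun x => (μ / 2) * ‖fderiv ℝ η x‖ ^ 2 +
            (β / 4) * (‖𝔷 x‖ ^ (ϖ - 1) * ‖ζ x‖ ^ 2)) Q := i1.add i2
        rw [integral_add i12 i3, integral_add i1 i2,
          integral_const_mul, integral_const_mul, integral_const_mul]
end
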